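/- Fix ρ, γ > 0. Let (z*, v*) ∈ (ℝ^n × ℝ) × ℝ^m and Γ₀* := {i : v*_i ≤ 0}. Then (z*, v*) is a local minimizer of the penalty problem (pen) if and only if (z*, v*) is a global minimizer of the convex problem: minimize Φ(z, v) := (1/2)‖w‖² + ρ Σ_{i=1}^m |u_i(z) − v_i| over (z, v) subject to v_i ≤ 0 for all i ∈ Γ₀*. -/

import Mathlib

open scoped RealInnerProductSpace BigOperators

noncomputable section

/-- The 0/1 loss: `1` if `t > 0`, `0` otherwise. -/
def l01 (t : ℝ) : ℝ := if 0 < t then 1 else 0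

/-- The ramp loss with parameter `γ`. -/
def ramp (γ t : ℝ) : ℝ := if γ < t then 1 else if 0 ≤ t then t else 0

variable {n m : ℕ}

/-- The margin residual `u_i(z) = 1 - y_i (⟨w, x_i⟩ + b)` for `z = (w, b)`. -/
def uu (x : Fin m → EuclideanSpace ℝ (Fin n)) (y : Fin m → ℝ)
    (z : EuclideanSpace ℝ (Fin n) × ℝ) (i : Fin m) : ℝ :=
  1 - y i * (⟪z.1, x i⟫ + z.2)

/-- The 0/1-loss SVM objective `F_{0/1}`. -/
def F01 (x : Fin m → EuclideanSpace ℝ (Fin n)) (y : Fin m → ℝ) (lam : ℝ)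
    (z : EuclideanSpace ℝ (Fin n) × ℝ) : ℝ :=
  (1 / 2) * ‖z.1‖ ^ 2 + lam * ∑ i, l01 (uu x y z i)

/-- The hinge-loss SVM objective `F₁(z, c)`. -/
def F1 (x : Fin m → EuclideanSpace ℝ (Fin n)) (y : Fin m → ℝ)
    (c : EuclideanSpace ℝ (Fin m)) (z : EuclideanSpace ℝ (Fin n) × ℝ) : ℝ :=
  (1 / 2) * ‖z.1‖ ^ 2 + ∑ i, c i * max (uu x y z i) 0

/-- The dual quadratic objective `G(α) = (1/2)⟨α, Qα⟩ - Σ αᵢ`,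
where `Q_{ij} = y_i y_j ⟨x_i, x_j⟩`. -/
def Gfun (x : Fin m → EuclideanSpace ℝ (Fin n)) (y : Fin m → ℝ)
    (α : EuclideanSpace ℝ (Fin m)) : ℝ :=
  (1 / 2) * ∑ i, ∑ j, α i * (y i * y j * ⟪x i, x j⟫) * α j - ∑ i, α i

/-- The ℓ₀ "norm": the number of nonzero entries. -/
def norm0 (α : EuclideanSpace ℝ (Fin m)) : ℝ := (({i | α i ≠ 0} : Set (Fin m)).ncard : ℝ)

/-- Feasibility for the dual problem `(D_{0/1})`. -/
def DFeas (y : Fin m → ℝ) (α : EuclideanSpace ℝ (Fin m)) : Prop :=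
  (∀ i, 0 ≤ α i) ∧ ∑ i, y i * α i = 0

/-- `α*` is a local minimizer of the dual problem `(D_{0/1})` with parameter `μ`. -/
def DLocalMin (x : Fin m → EuclideanSpace ℝ (Fin n)) (y : Fin m → ℝ) (μ : ℝ)
    (αs : EuclideanSpace ℝ (Fin m)) : Prop :=
  DFeas y αs ∧ ∃ ε > 0, ∀ α : EuclideanSpace ℝ (Fin m), DFeas y α → dist α αs ≤ ε →
    Gfun x y αs + μ * norm0 αs ≤ Gfun x y α + μ * norm0 α

/-- The KKT system (KKT-T*) for `(D_I)` with `I = T* = {i : α*_i ≠ 0}`: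
`Qα* - 1 + u* + b* y = 0`; `α*_i ≥ 0`, `u*_i ≤ 0`, `α*_i u*_i = 0` on `T*`;
(`α*_i = 0` off `T*` holds by definition of `T*`); and `⟨y, α*⟩ = 0`. -/
def KKTT (x : Fin m → EuclideanSpace ℝ (Fin n)) (y : Fin m → ℝ)
    (αs us : EuclideanSpace ℝ (Fin m)) (bs : ℝ) : Prop :=
  (∀ i, (∑ j, (y i * y j * ⟪x i, x j⟫) * αs j) - 1 + us i + bs * y i = 0) ∧
  (∀ i, αs i ≠ 0 → 0 ≤ αs i ∧ us i ≤ 0 ∧ αs i * us i = 0) ∧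
  ∑ i, y i * αs i = 0

/-- The ramp-loss SVM objective of `(P_r)`. -/
def PrObj (x : Fin m → EuclideanSpace ℝ (Fin n)) (y : Fin m → ℝ) (ρ γ : ℝ)
    (z : EuclideanSpace ℝ (Fin n) × ℝ) : ℝ :=
  (1 / 2) * ‖z.1‖ ^ 2 + ρ * ∑ i, ramp γ (uu x y z i)

/-- The penalty objective of problem (pen). -/
def Pen (x : Fin m → EuclideanSpace ℝ (Fin n)) (y : Fin m → ℝ) (ρ γ : ℝ)
    (p : (EuclideanSpace ℝ (Fin n) × ℝ) × EuclideanSpace ℝ (Fin m)) : ℝ :=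
  (1 / 2) * ‖p.1.1‖ ^ 2 + ρ * ∑ i, |uu x y p.1 i - p.2 i| + ρ * γ * ∑ i, l01 (p.2 i)

/-- The smooth part `Φ(z, v)` of the penalty objective. -/
def Phi (x : Fin m → EuclideanSpace ℝ (Fin n)) (y : Fin m → ℝ) (ρ : ℝ)
    (p : (EuclideanSpace ℝ (Fin n) × ℝ) × EuclideanSpace ℝ (Fin m)) : ℝ :=
  (1 / 2) * ‖p.1.1‖ ^ 2 + ρ * ∑ i, |uu x y p.1 i - p.2 i|

/-- The KKT system (KKT-PI) for `(P_{0/1})` at `z*`. -/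
def KKTPI (x : Fin m → EuclideanSpace ℝ (Fin n)) (y : Fin m → ℝ)
    (zs : EuclideanSpace ℝ (Fin n) × ℝ) (αs : EuclideanSpace ℝ (Fin m)) : Prop :=
  zs.1 = ∑ i, (αs i * y i) • x i ∧
  (∀ i, uu x y zs i ≤ 0 → 0 ≤ αs i ∧ αs i * uu x y zs i = 0) ∧
  (∀ i, ¬ uu x y zs i ≤ 0 → αs i = 0) ∧
  ∑ i, y i * αs i = 0


section Aux

variable {n m : ℕ}

lemma abs_coord_le_norm (v : EuclideanSpace ℝ (Fin m)) (i : Fin m) : |v i| ≤ ‖v‖ := by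
  rw [EuclideanSpace.norm_eq]
  have h1 : |v i| = Real.sqrt (‖v i‖ ^ 2) := by
    rw [Real.sqrt_sq_eq_abs]; simp
  rw [h1]
  exact Real.sqrt_le_sqrt (Finset.single_le_sum (f := fun j => ‖v j‖ ^ 2)
    (fun j _ => sq_nonneg _) (Finset.mem_univ i))

lemma uu_combo (x : Fin m → EuclideanSpace ℝ (Fin n)) (y : Fin m → ℝ)
    (z z' : EuclideanSpace ℝ (Fin n) × ℝ) (t : ℝ) (i : Fin m) :
    uu x y (z + t • (z' - z)) i = (1 - t) * uu x y z i + t * uu x y z' i := by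
  simp only [uu, Prod.fst_add, Prod.smul_fst, Prod.fst_sub, Prod.snd_add, Prod.smul_snd,
    Prod.snd_sub, inner_add_left, real_inner_smul_left, inner_sub_left, smul_eq_mul]
  ring

lemma pen_eq_phi (x : Fin m → EuclideanSpace ℝ (Fin n)) (y : Fin m → ℝ) (ρ γ : ℝ)
    (p : (EuclideanSpace ℝ (Fin n) × ℝ) × EuclideanSpace ℝ (Fin m)) :
    Pen x y ρ γ p = Phi x y ρ p + ρ * γ * ∑ i, l01 (p.2 i) := by
  unfold Pen Phi; ring

lemma coord2_le_dist (p q : (EuclideanSpace ℝ (Fin n) × ℝ) × EuclideanSpace ℝ (Fin m))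
    (i : Fin m) : |p.2 i - q.2 i| ≤ dist p q := by
  have h1 : |p.2 i - q.2 i| = |(p.2 - q.2) i| := rfl
  rw [h1]
  calc |(p.2 - q.2) i| ≤ ‖p.2 - q.2‖ := abs_coord_le_norm _ _
    _ = dist p.2 q.2 := (dist_eq_norm _ _).symm
    _ ≤ dist p q := by rw [Prod.dist_eq]; exact le_max_right _ _

lemma exists_eps (vs : EuclideanSpace ℝ (Fin m)) (hm : 0 < m) (c : ℝ) (hc : 0 < c) :
    ∃ ε > 0, ε ≤ c ∧ ∀ i, 0 < vs i → ε < vs i := by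
  haveI : Nonempty (Fin m) := ⟨⟨0, hm⟩⟩
  set f : Fin m → ℝ := fun i => if 0 < vs i then vs i / 2 else c with hf
  refine ⟨min c (Finset.univ.inf' Finset.univ_nonempty f), ?_, min_le_left _ _, ?_⟩
  · refine lt_min hc ?_
    rw [Finset.lt_inf'_iff]
    intro i _
    by_cases h : 0 < vs i <;> simp only [hf, h, if_true, if_false] <;> [linarith; exact hc]
  · intro i hi
    calc min c (Finset.univ.inf' Finset.univ_nonempty f)
        ≤ Finset.univ.inf' Finset.univ_nonempty f := min_le_right _ _
      _ ≤ f i := Finset.inf'_le f (Finset.mem_univ i)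
      _ < vs i := by simp only [hf, hi, if_true]; linarith

lemma phi_seg (x : Fin m → EuclideanSpace ℝ (Fin n)) (y : Fin m → ℝ) {ρ : ℝ} (hρ : 0 ≤ ρ)
    (p q : (EuclideanSpace ℝ (Fin n) × ℝ) × EuclideanSpace ℝ (Fin m))
    {t : ℝ} (ht0 : 0 ≤ t) (ht1 : t ≤ 1) :
    Phi x y ρ (p + t • (q - p)) ≤ (1 - t) * Phi x y ρ p + t * Phi x y ρ q := by
  have hfst : (p + t • (q - p)).1.1 = p.1.1 + t • (q.1.1 - p.1.1) := by
    simp [Prod.fst_add, Prod.smul_fst, Prod.fst_sub]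
  have hA : ‖(p + t • (q - p)).1.1‖ ≤ (1 - t) * ‖p.1.1‖ + t * ‖q.1.1‖ := by
    rw [hfst]
    have hc : p.1.1 + t • (q.1.1 - p.1.1) = (1 - t) • p.1.1 + t • q.1.1 := by module
    rw [hc]
    calc ‖(1 - t) • p.1.1 + t • q.1.1‖ ≤ ‖(1 - t) • p.1.1‖ + ‖t • q.1.1‖ := norm_add_le _ _
      _ = (1 - t) * ‖p.1.1‖ + t * ‖q.1.1‖ := by
          rw [norm_smul, norm_smul, Real.norm_of_nonneg (by linarith), Real.norm_of_nonneg ht0]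
  have hA2 : ‖(p + t • (q - p)).1.1‖ ^ 2 ≤ (1 - t) * ‖p.1.1‖ ^ 2 + t * ‖q.1.1‖ ^ 2 := by
    have hsq := pow_le_pow_left₀ (norm_nonneg _) hA 2
    nlinarith [hsq, sq_nonneg (‖p.1.1‖ - ‖q.1.1‖),
      mul_nonneg (mul_nonneg ht0 (by linarith : (0:ℝ) ≤ 1 - t)) (sq_nonneg (‖p.1.1‖ - ‖q.1.1‖))]
  have hS : ∑ i, |uu x y (p + t • (q - p)).1 i - (p + t • (q - p)).2 i|
      ≤ ∑ i, ((1 - t) * |uu x y p.1 i - p.2 i| + t * |uu x y q.1 i - q.2 i|) := by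
    apply Finset.sum_le_sum
    intro i _
    have h1 : (p + t • (q - p)).1 = p.1 + t • (q.1 - p.1) := by
      simp [Prod.fst_add, Prod.smul_fst, Prod.fst_sub]
    have h2 : (p + t • (q - p)).2 i = p.2 i + t * (q.2 i - p.2 i) := by
      simp [Prod.snd_add, Prod.smul_snd, Prod.snd_sub]
    rw [h1, uu_combo, h2]
    have : (1 - t) * uu x y p.1 i + t * uu x y q.1 i - (p.2 i + t * (q.2 i - p.2 i))
        = (1 - t) * (uu x y p.1 i - p.2 i) + t * (uu x y q.1 i - q.2 i) := by ring
    rw [this]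
    calc |(1 - t) * (uu x y p.1 i - p.2 i) + t * (uu x y q.1 i - q.2 i)|
        ≤ |(1 - t) * (uu x y p.1 i - p.2 i)| + |t * (uu x y q.1 i - q.2 i)| := abs_add_le _ _
      _ = (1 - t) * |uu x y p.1 i - p.2 i| + t * |uu x y q.1 i - q.2 i| := by
          rw [abs_mul, abs_mul, abs_of_nonneg (by linarith : (0:ℝ) ≤ 1 - t), abs_of_nonneg ht0]
  have hS' : ρ * ∑ i, |uu x y (p + t • (q - p)).1 i - (p + t • (q - p)).2 i|
      ≤ ρ * ((1 - t) * ∑ i, |uu x y p.1 i - p.2 i| + t * ∑ i, |uu x y q.1 i - q.2 i|) := by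
    apply mul_le_mul_of_nonneg_left _ hρ
    calc ∑ i, |uu x y (p + t • (q - p)).1 i - (p + t • (q - p)).2 i|
        ≤ ∑ i, ((1 - t) * |uu x y p.1 i - p.2 i| + t * |uu x y q.1 i - q.2 i|) := hS
      _ = (1 - t) * ∑ i, |uu x y p.1 i - p.2 i| + t * ∑ i, |uu x y q.1 i - q.2 i| := by
          rw [Finset.sum_add_distrib, Finset.mul_sum, Finset.mul_sum]
  unfold Phi
  nlinarith [hA2, hS']

end Aux

/-- `(z*, v*)` is a local minimizer of the penalty problem (pen) iff it
is a global minimizer of `Φ` subject to `v_i ≤ 0` for `i ∈ Γ₀* = {i : v*_i ≤ 0}`. -/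
theorem stmt10 {n m : ℕ} (hn : 0 < n) (hm : 0 < m)
    (x : Fin m → EuclideanSpace ℝ (Fin n)) (y : Fin m → ℝ)
    (hy : ∀ i, y i = 1 ∨ y i = -1)
    (ρ γ : ℝ) (hρ : 0 < ρ) (hγ : 0 < γ)
    (zs : EuclideanSpace ℝ (Fin n) × ℝ) (vs : EuclideanSpace ℝ (Fin m)) :
    (∃ ε > 0, ∀ p : (EuclideanSpace ℝ (Fin n) × ℝ) × EuclideanSpace ℝ (Fin m),
        dist p (zs, vs) ≤ ε → Pen x y ρ γ (zs, vs) ≤ Pen x y ρ γ p)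
    ↔ ((∀ i, vs i ≤ 0 → vs i ≤ 0) ∧
       ∀ p : (EuclideanSpace ℝ (Fin n) × ℝ) × EuclideanSpace ℝ (Fin m),
         (∀ i, vs i ≤ 0 → p.2 i ≤ 0) → Phi x y ρ (zs, vs) ≤ Phi x y ρ p) := by
  constructor
  · rintro ⟨ε, hε, hloc⟩
    refine ⟨fun i h => h, ?_⟩
    intro q hq
    obtain ⟨ε', hε'0, hε'le, hε'lt⟩ := exists_eps vs hm ε hε
    by_cases hD : dist q (zs, vs) = 0
    · rw [dist_eq_zero] at hD; rw [hD]
    · have hD0 : 0 < dist q (zs, vs) := lt_of_le_of_ne dist_nonneg (Ne.symm hD)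
      set t := min 1 (ε' / dist q (zs, vs)) with htdef
      have ht0 : 0 < t := lt_min one_pos (div_pos hε'0 hD0)
      have ht1 : t ≤ 1 := min_le_left _ _
      have htD : t * dist q (zs, vs) ≤ ε' := by
        have h1 : t ≤ ε' / dist q (zs, vs) := min_le_right _ _
        calc t * dist q (zs, vs) ≤ (ε' / dist q (zs, vs)) * dist q (zs, vs) := by nlinarith
          _ = ε' := div_mul_cancel₀ _ hD
      set pt := (zs, vs) + t • (q - (zs, vs)) with hptdef
      have hpt2 : ∀ i, pt.2 i = vs i + t * (q.2 i - vs i) := by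
        intro i
        simp [hptdef, Prod.snd_add, Prod.smul_snd, Prod.snd_sub]
      have hdistpt : dist pt (zs, vs) ≤ ε := by
        rw [dist_eq_norm]
        have : pt - (zs, vs) = t • (q - (zs, vs)) := by rw [hptdef]; abel
        rw [this, norm_smul, Real.norm_of_nonneg ht0.le, ← dist_eq_norm]
        linarith
      have hcoord : ∀ i, |q.2 i - vs i| ≤ dist q (zs, vs) := fun i =>
        coord2_le_dist q (zs, vs) i
      have hl01 : ∀ i, l01 (pt.2 i) = l01 (vs i) := by
        intro i
        by_cases hvi : 0 < vs i
        · have h1 : t * |q.2 i - vs i| ≤ ε' := by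
            have := hcoord i
            nlinarith
          have h2 : 0 < pt.2 i := by
            rw [hpt2 i]
            have h3 : -(t * |q.2 i - vs i|) ≤ t * (q.2 i - vs i) := by
              have := neg_abs_le (q.2 i - vs i)
              nlinarith [abs_nonneg (q.2 i - vs i)]
            have := hε'lt i hvi
            linarith
          simp [l01, h2, hvi]
        · push_neg at hvi
          have h2 : pt.2 i ≤ 0 := by
            rw [hpt2 i]
            have hq2 : q.2 i ≤ 0 := hq i hvi
            nlinarith
          simp [l01, not_lt.mpr h2, not_lt.mpr hvi]
      have hPen := hloc pt hdistpt
      rw [pen_eq_phi, pen_eq_phi] at hPen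
      have hsum : ∑ i, l01 (pt.2 i) = ∑ i, l01 (((zs, vs) :
          (EuclideanSpace ℝ (Fin n) × ℝ) × EuclideanSpace ℝ (Fin m)).2 i) := by
        exact Finset.sum_congr rfl fun i _ => hl01 i
      rw [hsum] at hPen
      have hΦ : Phi x y ρ (zs, vs) ≤ Phi x y ρ pt := by linarith
      have hseg := phi_seg x y hρ.le (zs, vs) q ht0.le ht1
      rw [← hptdef] at hseg
      nlinarith
  · rintro ⟨-, hglob⟩
    obtain ⟨ε, hε0, hεγ, hεlt⟩ := exists_eps vs hm γ hγ
    refine ⟨ε, hε0, ?_⟩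
    intro p hdist
    set v' : EuclideanSpace ℝ (Fin m) := WithLp.toLp 2 (fun i => if 0 < vs i then p.2 i else min (p.2 i) 0)
      with hv'
    have hfeas : ∀ i, vs i ≤ 0 → ((p.1, v') :
        (EuclideanSpace ℝ (Fin n) × ℝ) × EuclideanSpace ℝ (Fin m)).2 i ≤ 0 := by
      intro i hi
      simp only [hv', PiLp.toLp_apply, not_lt.mpr hi, if_false]
      exact min_le_right _ _
    have hΦ := hglob (p.1, v') hfeas
    have hcoord : ∀ i, |p.2 i - vs i| ≤ ε := fun i =>
      (coord2_le_dist p (zs, vs) i).trans hdist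
    have hkey : ∀ i, ρ * |uu x y p.1 i - v' i| + ρ * γ * l01 (vs i)
        ≤ ρ * |uu x y p.1 i - p.2 i| + ρ * γ * l01 (p.2 i) := by
      intro i
      by_cases hvi : 0 < vs i
      · have h1 : 0 < p.2 i := by
          have := hεlt i hvi
          have h2 := abs_le.mp (le_of_eq rfl : |p.2 i - vs i| ≤ |p.2 i - vs i|)
          have h3 := neg_abs_le (p.2 i - vs i)
          have := hcoord i
          linarith
        simp only [hv', PiLp.toLp_apply, hvi, if_true, l01, h1]
        simp
      · push_neg at hvi
        simp only [hv', PiLp.toLp_apply, not_lt.mpr hvi, if_false, l01, not_lt.mpr hvi, if_neg (lt_irrefl 0)]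
        by_cases hp2 : 0 < p.2 i
        · have hmin : min (p.2 i) 0 = 0 := min_eq_right hp2.le
          rw [hmin, if_pos hp2]
          have habs : |uu x y p.1 i - 0| ≤ |uu x y p.1 i - p.2 i| + p.2 i := by
            have := abs_add_le (uu x y p.1 i - p.2 i) (p.2 i)
            simp only [sub_add_cancel] at this
            have h2 : |p.2 i| = p.2 i := abs_of_pos hp2
            calc |uu x y p.1 i - 0| = |uu x y p.1 i| := by rw [sub_zero]
              _ ≤ |uu x y p.1 i - p.2 i| + |p.2 i| := this
              _ = |uu x y p.1 i - p.2 i| + p.2 i := by rw [h2]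
          have hpγ : p.2 i ≤ γ := by
            have := hcoord i
            have := abs_le.mp (hcoord i)
            linarith [this.2, hεγ]
          nlinarith [abs_nonneg (uu x y p.1 i - 0), abs_nonneg (uu x y p.1 i - p.2 i)]
        · rw [min_eq_left (not_lt.mp hp2), if_neg hp2]
    have hsum : ρ * ∑ i, |uu x y p.1 i - v' i| + ρ * γ * ∑ i, l01 (vs i)
        ≤ ρ * ∑ i, |uu x y p.1 i - p.2 i| + ρ * γ * ∑ i, l01 (p.2 i) := by
      have := Finset.sum_le_sum (fun i (_ : i ∈ Finset.univ) => hkey i)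
      rw [Finset.sum_add_distrib, Finset.sum_add_distrib, ← Finset.mul_sum, ← Finset.mul_sum,
        ← Finset.mul_sum, ← Finset.mul_sum] at this
      exact this
    rw [pen_eq_phi, pen_eq_phi]
    have hΦexp : Phi x y ρ (p.1, v') = (1 / 2) * ‖p.1.1‖ ^ 2
        + ρ * ∑ i, |uu x y p.1 i - v' i| := rfl
    have hΦexp2 : Phi x y ρ p = (1 / 2) * ‖p.1.1‖ ^ 2
        + ρ * ∑ i, |uu x y p.1 i - p.2 i| := rfl
    have hl : ∑ i, l01 (((zs, vs) :
        (EuclideanSpace ℝ (Fin n) × ℝ) × EuclideanSpace ℝ (Fin m)).2 i)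
        = ∑ i, l01 (vs i) := rfl
    rw [hl]
    rw [hΦexp] at hΦ
    rw [hΦexp2]
    linarith

end
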